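/- arXiv:1310.0066 — 4 statements merged into one kernel-verified Lean document; each statement's English description precedes it below -/
import Mathlib

section
/- Let H be a complex Hilbert space and A : H →L[ℂ] H a bounded linear operator with Re⟨Aφ,φ⟩ ≥ 0 for all φ ∈ H. Then for every τ > 0 the operator I + (τ/2)A is invertible and the Crank–Nicolson operator R = (I + (τ/2)A)^{−1}(I − (τ/2)A) satisfies ‖Rⁿ‖ ≤ 1 for all n ∈ ℕ. -/
open scoped InnerProductSpace

/-- Unconditional stability of the Crank–Nicolson scheme: if `A` is a bounded
accretive operator on a complex Hilbert space (`Re⟨Aφ,φ⟩ ≥ 0`), then for every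
`τ > 0` the operator `I + (τ/2)A` is invertible and every power of the
Crank–Nicolson operator `R = (I + (τ/2)A)⁻¹ (I - (τ/2)A)` is a contraction. -/
theorem crank_nicolson_stability
    {H : Type*} [NormedAddCommGroup H] [InnerProductSpace ℂ H] [CompleteSpace H]
    (A : H →L[ℂ] H)
    (hacc : ∀ φ : H, 0 ≤ (inner ℂ (A φ) φ : ℂ).re)
    (τ : ℝ) (hτ : 0 < τ) :
    IsUnit (1 + ((τ / 2 : ℝ) : ℂ) • A) ∧
    ∀ n : ℕ,
      ‖(Ring.inverse (1 + ((τ / 2 : ℝ) : ℂ) • A) * (1 - ((τ / 2 : ℝ) : ℂ) • A)) ^ n‖ ≤ 1 := by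
  set c : ℂ := ((τ / 2 : ℝ) : ℂ) with hc
  set B : H →L[ℂ] H := c • A with hB
  -- accretivity of B
  have hBacc : ∀ x : H, 0 ≤ RCLike.re (inner ℂ (B x) x : ℂ) := by
    intro x
    have h1 : (inner ℂ (B x) x : ℂ) = c * inner ℂ (A x) x := by
      rw [hB]
      simp only [ContinuousLinearMap.smul_apply, inner_smul_left, hc, Complex.conj_ofReal]
    rw [RCLike.re_to_complex, h1]
    simp only [hc, Complex.mul_re, Complex.ofReal_re, Complex.ofReal_im, zero_mul, sub_zero]
    have := hacc x
    positivity
  have hre : ∀ x : H, 0 ≤ RCLike.re (inner ℂ x (B x) : ℂ) := by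
    intro x
    rw [inner_re_symm]
    exact hBacc x
  set T : H →L[ℂ] H := 1 + B with hT
  -- key norm inequalities
  have hTapp : ∀ x : H, T x = x + B x := by intro x; simp [hT]
  have hle1 : ∀ x : H, ‖x‖ ≤ ‖T x‖ := by
    intro x
    have hsq : ‖x‖ ^ 2 ≤ ‖T x‖ ^ 2 := by
      rw [hTapp, @norm_add_sq ℂ]
      nlinarith [hre x, sq_nonneg ‖B x‖]
    nlinarith [norm_nonneg x, norm_nonneg (T x)]
  have hle2 : ∀ x : H, ‖x - B x‖ ≤ ‖T x‖ := by
    intro x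
    have hsq : ‖x - B x‖ ^ 2 ≤ ‖T x‖ ^ 2 := by
      rw [hTapp, @norm_add_sq ℂ, @norm_sub_sq ℂ]
      nlinarith [hre x]
    nlinarith [norm_nonneg (x - B x), norm_nonneg (T x)]
  -- T is injective and has closed range
  have hanti : AntilipschitzWith 1 T :=
    AddMonoidHomClass.antilipschitz_of_bound T (fun x => by simpa using hle1 x)
  have hinj : Function.Injective T := hanti.injective
  have hclosed : IsClosed (Set.range T) := hanti.isClosed_range T.uniformContinuous
  -- surjectivity
  have hrange_closed : IsClosed ((LinearMap.range (T : H →ₗ[ℂ] H) : Submodule ℂ H) : Set H) := by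
    have h : ((LinearMap.range (T : H →ₗ[ℂ] H) : Submodule ℂ H) : Set H) = Set.range T := by
      ext y; simp [LinearMap.mem_range]
    rw [h]; exact hclosed
  haveI : CompleteSpace (LinearMap.range (T : H →ₗ[ℂ] H) : Submodule ℂ H) :=
    hrange_closed.completeSpace_coe
  have hsurj : LinearMap.range (T : H →ₗ[ℂ] H) = ⊤ := by
    rw [← Submodule.orthogonal_eq_bot_iff]
    rw [Submodule.eq_bot_iff]
    intro y hy
    have h0 : (inner ℂ (T y) y : ℂ) = 0 := hy (T y) ⟨y, rfl⟩
    have h1 : (inner ℂ (T y) y : ℂ) = inner ℂ y y + inner ℂ (B y) y := by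
      rw [hTapp, inner_add_left]
    have hself : RCLike.re (inner ℂ y y : ℂ) = ‖y‖ ^ 2 := by
      rw [← inner_self_eq_norm_sq (𝕜 := ℂ)]
    have h2 : (0:ℝ) = ‖y‖ ^ 2 + RCLike.re (inner ℂ (B y) y : ℂ) := by
      have := congrArg (RCLike.re (K := ℂ)) (h0.symm.trans h1)
      rwa [map_zero, map_add, hself] at this
    have := hBacc y
    have hy0 : ‖y‖ = 0 := by nlinarith [norm_nonneg y]
    exact norm_eq_zero.mp hy0
  -- build the inverse
  let e : H ≃L[ℂ] H := ContinuousLinearEquiv.ofBijective T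
    (LinearMap.ker_eq_bot.mpr hinj) hsurj
  have heT : ∀ x, e x = T x := fun x => rfl
  let u : (H →L[ℂ] H)ˣ :=
    ⟨T, (e.symm : H →L[ℂ] H),
      by ext x; exact e.apply_symm_apply x,
      by ext x; exact e.symm_apply_apply x⟩
  have hu : IsUnit T := ⟨u, rfl⟩
  refine ⟨hu, ?_⟩
  have hinv : Ring.inverse T = (e.symm : H →L[ℂ] H) := Ring.inverse_unit u
  -- the CN operator is a contraction
  have hRnorm : ‖Ring.inverse T * (1 - B)‖ ≤ 1 := by
    rw [hinv]
    refine ContinuousLinearMap.opNorm_le_bound _ zero_le_one fun z => ?_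
    have hcomm : (e.symm : H →L[ℂ] H) ((1 - B) z) = (1 - B) ((e.symm : H →L[ℂ] H) z) := by
      apply hinj
      have hmul : T * (1 - B) = (1 - B) * T := by rw [hT]; noncomm_ring
      have h1 : T ((1 - B) ((e.symm : H →L[ℂ] H) z)) = (1 - B) (T ((e.symm : H →L[ℂ] H) z)) := by
        have := congrFun (congrArg DFunLike.coe hmul) ((e.symm : H →L[ℂ] H) z)
        simpa [ContinuousLinearMap.mul_apply] using this
      have h2 : T ((e.symm : H →L[ℂ] H) z) = z := e.apply_symm_apply z
      have h3 : T ((e.symm : H →L[ℂ] H) ((1 - B) z)) = (1 - B) z := e.apply_symm_apply ((1 - B) z)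
      rw [h3, h1, h2]
    simp only [ContinuousLinearMap.mul_apply, hcomm]
    set x := (e.symm : H →L[ℂ] H) z with hx
    have h2 : T x = z := e.apply_symm_apply z
    have h3 : (1 - B) x = x - B x := by simp
    rw [h3, one_mul, ← h2]
    exact hle2 x
  intro n
  induction n with
  | zero => rw [pow_zero]; exact ContinuousLinearMap.norm_id_le
  | succ n ih =>
    calc ‖(Ring.inverse T * (1 - B)) ^ (n + 1)‖
        ≤ ‖(Ring.inverse T * (1 - B)) ^ n‖ * ‖Ring.inverse T * (1 - B)‖ := by
          rw [pow_succ]; exact norm_mul_le _ _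
      _ ≤ 1 * 1 := mul_le_mul ih hRnorm (norm_nonneg _) zero_le_one
      _ = 1 := one_mul 1
end

section
/- Let r_{cn}(z) = (1 − z/2)/(1 + z/2). For every δ₁ ∈ (0, π/2) and R > 0 there exist constants c, C > 0 such that for every natural number n ≥ 1 and every z with |arg z| ≤ δ₁ and |z| ≤ R, the estimate |e^{−nz} − r_{cn}(z)ⁿ| ≤ C n |z|³ e^{−c n |z|} holds. -/
open Real

set_option maxHeartbeats 1000000

private lemma cn_pow_sub_pow_abs (a b : ℂ) (M : ℝ)
    (ha : ‖a‖ ≤ M) (hb : ‖b‖ ≤ M) (n : ℕ) :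
    ‖a ^ n - b ^ n‖ ≤ n * ‖a - b‖ * M ^ (n - 1) := by
  have hM : 0 ≤ M := le_trans (norm_nonneg a) ha
  induction n with
  | zero => simp
  | succ n ih =>
    have key : a ^ (n + 1) - b ^ (n + 1) = a * (a ^ n - b ^ n) + (a - b) * b ^ n := by ring
    rw [key]
    have h1 : ‖a * (a ^ n - b ^ n) + (a - b) * b ^ n‖
        ≤ ‖a‖ * ‖a ^ n - b ^ n‖
          + ‖a - b‖ * ‖b‖ ^ n := by
      calc ‖a * (a ^ n - b ^ n) + (a - b) * b ^ n‖
          ≤ ‖a * (a ^ n - b ^ n)‖ + ‖(a - b) * b ^ n‖ :=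
            norm_add_le _ _
        _ = ‖a‖ * ‖a ^ n - b ^ n‖
            + ‖a - b‖ * ‖b‖ ^ n := by
            simp [map_mul, map_pow]
    have h2 : ‖a‖ * ‖a ^ n - b ^ n‖
        ≤ M * (n * ‖a - b‖ * M ^ (n - 1)) := by
      apply mul_le_mul ha ih (norm_nonneg _) hM
    have h3 : ‖a - b‖ * ‖b‖ ^ n
        ≤ ‖a - b‖ * M ^ n := by
      gcongr
    refine le_trans h1 (le_trans (add_le_add h2 h3) ?_)
    rcases Nat.eq_zero_or_pos n with h | h
    · subst h; simp
    · have hMn : M * M ^ (n - 1) = M ^ n := by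
        rw [← pow_succ']
        congr 1
        omega
      have heq : M * (n * ‖a - b‖ * M ^ (n - 1))
          = n * ‖a - b‖ * M ^ n := by
        rw [show M * (n * ‖a - b‖ * M ^ (n - 1))
            = n * ‖a - b‖ * (M * M ^ (n - 1)) by ring, hMn]
      rw [heq, Nat.add_sub_cancel]
      apply le_of_eq
      push_cast
      ring

/-- Consistency: `|e^{-z} - r_cn(z)| ≤ 2 |z|³` when `Re z ≥ 0`. -/
private lemma cn_consistency {z : ℂ} (hx : 0 ≤ z.re) :
    ‖Complex.exp (-z) - (1 - z / 2) / (1 + z / 2)‖ ≤ 2 * ‖z‖ ^ 3 := by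
  set s := ‖z‖ with hs_def
  have hs0 : 0 ≤ s := norm_nonneg z
  have hre : (1 + z / 2).re = 1 + z.re / 2 := by simp
  have him : (1 + z / 2).im = z.im / 2 := by simp
  have hre' : (1 - z / 2).re = 1 - z.re / 2 := by simp
  have him' : (1 - z / 2).im = -(z.im / 2) := by simp
  have hsq : s ^ 2 = z.re * z.re + z.im * z.im := by
    rw [hs_def, Complex.sq_norm, Complex.normSq_apply]
  have hden : 1 ≤ ‖1 + z / 2‖ := by
    have h1 : ‖1 + z / 2‖ ^ 2 = (1 + z.re / 2) ^ 2 + (z.im / 2) ^ 2 := by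
      rw [Complex.sq_norm, Complex.normSq_apply, hre, him]; ring
    nlinarith [norm_nonneg (1 + z / 2)]
  have hexp_le : ‖Complex.exp (-z)‖ ≤ 1 := by
    rw [Complex.norm_exp]
    simp only [Complex.neg_re]
    exact Real.exp_le_one_iff.mpr (by linarith)
  have hnum_le : ‖1 - z / 2‖ ≤ ‖1 + z / 2‖ := by
    have h1 : ‖1 - z / 2‖ ^ 2 ≤ ‖1 + z / 2‖ ^ 2 := by
      rw [Complex.sq_norm, Complex.sq_norm, Complex.normSq_apply, Complex.normSq_apply,
        hre, him, hre', him']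
      nlinarith
    exact (abs_le_of_sq_le_sq' h1 (norm_nonneg _)).2
  have hr_le : ‖(1 - z / 2) / (1 + z / 2)‖ ≤ 1 := by
    rw [norm_div]
    exact div_le_one_of_le₀ hnum_le (norm_nonneg _)
  rcases le_or_gt s 1 with hs1 | hs1
  · -- small |z| : Taylor expansion
    have hne : (1 + z / 2) ≠ 0 := by
      intro h
      rw [h] at hden
      simp at hden
      linarith
    have key : Complex.exp (-z) - (1 - z / 2) / (1 + z / 2)
        = (Complex.exp (-z) * (1 + z / 2) - (1 - z / 2)) / (1 + z / 2) :=
      sub_div' hne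
    set E := Complex.exp (-z) - (1 - z + z ^ 2 / 2) with hE_def
    have hE : ‖E‖ ≤ 2 / 9 * s ^ 3 := by
      have habs : ‖-z‖ ≤ 1 := by rwa [norm_neg]
      have := Complex.exp_bound habs (n := 3) (by norm_num)
      have hsum : (∑ m ∈ Finset.range 3, (-z) ^ m / m.factorial) = 1 - z + z ^ 2 / 2 := by
        simp [Finset.sum_range_succ, Nat.factorial]
        ring
      rw [hsum] at this
      rw [hE_def]
      calc ‖Complex.exp (-z) - (1 - z + z ^ 2 / 2)‖
          ≤ ‖-z‖ ^ 3 * ((3 : ℕ).succ * ((3 : ℕ).factorial * 3 : ℝ)⁻¹) := this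
        _ = 2 / 9 * s ^ 3 := by
            rw [norm_neg]
            norm_num [Nat.factorial]
            ring
    have hnum_id : Complex.exp (-z) * (1 + z / 2) - (1 - z / 2)
        = z ^ 3 / 4 + E * (1 + z / 2) := by
      rw [hE_def]; ring
    have hden_le : ‖1 + z / 2‖ ≤ 3 / 2 := by
      calc ‖1 + z / 2‖ ≤ ‖1‖ + ‖z / 2‖ :=
            norm_add_le _ _
        _ = 1 + s / 2 := by simp [hs_def]
        _ ≤ 3 / 2 := by linarith
    have hnum_bound : ‖Complex.exp (-z) * (1 + z / 2) - (1 - z / 2)‖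
        ≤ 2 * s ^ 3 := by
      rw [hnum_id]
      calc ‖z ^ 3 / 4 + E * (1 + z / 2)‖
          ≤ ‖z ^ 3 / 4‖ + ‖E * (1 + z / 2)‖ := norm_add_le _ _
        _ = s ^ 3 / 4 + ‖E‖ * ‖1 + z / 2‖ := by
            simp [map_mul, map_pow, hs_def]
        _ ≤ s ^ 3 / 4 + 2 / 9 * s ^ 3 * (3 / 2) := by
            have := norm_nonneg E
            gcongr
        _ ≤ 2 * s ^ 3 := by nlinarith
    rw [key, norm_div]
    calc ‖Complex.exp (-z) * (1 + z / 2) - (1 - z / 2)‖ / ‖1 + z / 2‖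
        ≤ ‖Complex.exp (-z) * (1 + z / 2) - (1 - z / 2)‖ / 1 := by
          gcongr
      _ = ‖Complex.exp (-z) * (1 + z / 2) - (1 - z / 2)‖ := by ring
      _ ≤ 2 * s ^ 3 := hnum_bound
  · -- large |z| : crude bound
    have h1 : ‖Complex.exp (-z) - (1 - z / 2) / (1 + z / 2)‖
        ≤ ‖Complex.exp (-z)‖ + ‖(1 - z / 2) / (1 + z / 2)‖ := by
      rw [sub_eq_add_neg]
      calc ‖_‖ ≤ ‖Complex.exp (-z)‖
          + ‖-((1 - z / 2) / (1 + z / 2))‖ := norm_add_le _ _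
        _ = _ := by rw [norm_neg]
    have : (1 : ℝ) ≤ s ^ 3 := by nlinarith
    nlinarith

/-- Crank–Nicolson error bound on the bounded sector: for `|arg z| ≤ δ₁ < π/2`
and `|z| ≤ R`, `|e^{-nz} - r_cn(z)ⁿ| ≤ C n |z|³ e^{-c n |z|}` where
`r_cn(z) = (1 - z/2)/(1 + z/2)`. -/
theorem crank_nicolson_consistency_bounded_sector
    (δ₁ R : ℝ) (hδ : δ₁ ∈ Set.Ioo 0 (π / 2)) (hR : 0 < R) :
    ∃ c > (0 : ℝ), ∃ C > (0 : ℝ), ∀ n : ℕ, 1 ≤ n → ∀ z : ℂ,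
      |z.arg| ≤ δ₁ → ‖z‖ ≤ R →
      ‖Complex.exp (-(n : ℂ) * z) - ((1 - z / 2) / (1 + z / 2)) ^ n‖ ≤
        C * n * ‖z‖ ^ 3 * Real.exp (-(c * n * ‖z‖)) := by
  obtain ⟨hδ0, hδπ⟩ := hδ
  set k := Real.cos δ₁ with hk_def
  have hk0 : 0 < k := Real.cos_pos_of_mem_Ioo ⟨by linarith [Real.pi_pos], hδπ⟩
  have hk1 : k ≤ 1 := Real.cos_le_one δ₁
  set M := 1 + R + R ^ 2 / 4 with hM_def
  have hM1 : (1 : ℝ) ≤ M := by rw [hM_def]; nlinarith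
  have hM0 : (0 : ℝ) < M := by linarith
  set c := k / M with hc_def
  have hc0 : 0 < c := div_pos hk0 hM0
  have hck : c ≤ k := by
    rw [hc_def, div_le_iff₀ hM0]
    nlinarith
  refine ⟨c, hc0, 2 * Real.exp (c * R), by positivity, ?_⟩
  intro n hn z harg habs
  set s := ‖z‖ with hs_def
  have hs0 : 0 ≤ s := norm_nonneg z
  -- sector bound : k * s ≤ Re z
  have hre_lb : k * s ≤ z.re := by
    rcases eq_or_ne z 0 with rfl | hz
    · simp [hs_def]
    · have hspos : 0 < s := norm_pos_iff.mpr hz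
      have hcos : k ≤ Real.cos z.arg := by
        rw [← Real.cos_abs z.arg]
        exact Real.cos_le_cos_of_nonneg_of_le_pi (abs_nonneg _) (by linarith [Real.pi_pos]) harg
      have := Complex.cos_arg hz
      rw [this] at hcos
      rw [← hs_def] at hcos
      calc k * s ≤ z.re / s * s := by
            apply mul_le_mul_of_nonneg_right hcos hs0
        _ = z.re := by field_simp
  have hre0 : 0 ≤ z.re := le_trans (by positivity) hre_lb
  have hre_le : z.re ≤ s := Complex.re_le_norm z
  -- contractivity of exp
  have hexp_contr : ‖Complex.exp (-z)‖ ≤ Real.exp (-(c * s)) := by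
    rw [Complex.norm_exp]
    simp only [Complex.neg_re]
    apply Real.exp_le_exp.mpr
    have : c * s ≤ k * s := mul_le_mul_of_nonneg_right hck hs0
    linarith
  -- contractivity of r_cn
  have hr_contr : ‖(1 - z / 2) / (1 + z / 2)‖ ≤ Real.exp (-(c * s)) := by
    have hsq : s ^ 2 = z.re * z.re + z.im * z.im := by
      rw [hs_def, Complex.sq_norm, Complex.normSq_apply]
    have hre : (1 + z / 2).re = 1 + z.re / 2 := by simp
    have him : (1 + z / 2).im = z.im / 2 := by simp
    have hre' : (1 - z / 2).re = 1 - z.re / 2 := by simp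
    have him' : (1 - z / 2).im = -(z.im / 2) := by simp
    set N := 1 - z.re + s ^ 2 / 4 with hN_def
    set D := 1 + z.re + s ^ 2 / 4 with hD_def
    have hD1 : (1 : ℝ) ≤ D := by
      rw [hD_def]
      nlinarith [mul_nonneg hk0.le hs0, hre_lb]
    have hD0 : (0 : ℝ) < D := by linarith
    have habsN : ‖1 - z / 2‖ ^ 2 = N := by
      rw [Complex.sq_norm, Complex.normSq_apply, hre', him', hN_def, hsq]; ring
    have habsD : ‖1 + z / 2‖ ^ 2 = D := by
      rw [Complex.sq_norm, Complex.normSq_apply, hre, him, hD_def, hsq]; ring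
    -- D ≤ M
    have hDM : D ≤ M := by
      rw [hD_def, hM_def]
      have hsR : s ≤ R := habs
      nlinarith
    -- key step : N ≤ (1 - 2*c*s) * D
    have hcsD : c * s * D ≤ z.re := by
      have h1 : c * D ≤ k := by
        rw [hc_def]
        rw [div_mul_eq_mul_div, div_le_iff₀ hM0]
        nlinarith
      calc c * s * D = s * (c * D) := by ring
        _ ≤ s * k := mul_le_mul_of_nonneg_left h1 hs0
        _ = k * s := by ring
        _ ≤ z.re := hre_lb
    have hstep : N ≤ (1 - 2 * (c * s)) * D := by
      have : D - N = 2 * z.re := by rw [hD_def, hN_def]; ring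
      nlinarith
    have hexp_lb : 1 - 2 * (c * s) ≤ Real.exp (-(2 * (c * s))) := by
      have := Real.add_one_le_exp (-(2 * (c * s)))
      linarith
    have hNle : N ≤ Real.exp (-(2 * (c * s))) * D := by
      calc N ≤ (1 - 2 * (c * s)) * D := hstep
        _ ≤ Real.exp (-(2 * (c * s))) * D := by
            apply mul_le_mul_of_nonneg_right hexp_lb (le_of_lt hD0)
    have hsq2 : ‖(1 - z / 2) / (1 + z / 2)‖ ^ 2 ≤ Real.exp (-(c * s)) ^ 2 := by
      rw [norm_div, div_pow, habsN, habsD, sq, ← Real.exp_add]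
      rw [div_le_iff₀ hD0]
      calc N ≤ Real.exp (-(2 * (c * s))) * D := hNle
        _ = Real.exp (-(c * s) + -(c * s)) * D := by ring_nf
    exact (abs_le_of_sq_le_sq' hsq2 (Real.exp_nonneg _)).2
  -- consistency
  have hcons : ‖Complex.exp (-z) - (1 - z / 2) / (1 + z / 2)‖ ≤ 2 * s ^ 3 :=
    cn_consistency hre0
  -- rewrite exp(-n z) as (exp(-z))^n
  have hrw : Complex.exp (-(n : ℂ) * z) = Complex.exp (-z) ^ n := by
    rw [show (-(n : ℂ) * z) = (n : ℂ) * (-z) by ring, Complex.exp_nat_mul]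
  rw [hrw]
  calc ‖Complex.exp (-z) ^ n - ((1 - z / 2) / (1 + z / 2)) ^ n‖
      ≤ n * ‖Complex.exp (-z) - (1 - z / 2) / (1 + z / 2)‖
        * Real.exp (-(c * s)) ^ (n - 1) :=
        cn_pow_sub_pow_abs _ _ _ hexp_contr hr_contr n
    _ ≤ n * (2 * s ^ 3) * Real.exp (-(c * s)) ^ (n - 1) := by
        gcongr
    _ = 2 * Real.exp (c * s) * n * s ^ 3 * Real.exp (-(c * n * s)) := by
        rw [← Real.exp_nat_mul]
        have hcast : ((n - 1 : ℕ) : ℝ) * -(c * s) = c * s + -(c * n * s) := by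
          rw [Nat.cast_sub hn]
          push_cast
          ring
        rw [hcast, Real.exp_add]
        ring
    _ ≤ 2 * Real.exp (c * R) * n * s ^ 3 * Real.exp (-(c * n * s)) := by
        gcongr
    _ = 2 * Real.exp (c * R) * n * s ^ 3 * Real.exp (-(c * n * s)) := rfl
end

section
/- Let r_{cn}(z) = (1 − z/2)/(1 + z/2). For every δ₁ ∈ (0, π/2) there exist constants c, C, R > 0 such that for all natural n ≥ 1 and all z with |arg z| ≤ δ₁ and |z| ≥ R, the bound |e^{−nz} − r_{cn}(z)ⁿ| ≤ C e^{−c n / |z|} holds. -/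
open Real

/-- Crank–Nicolson error bound far from the origin: there exist `c, C, R > 0`
such that for `|arg z| ≤ δ₁ < π/2` and `|z| ≥ R`,
`|e^{-nz} - r_cn(z)ⁿ| ≤ C e^{-cn/|z|}` where `r_cn(z) = (1 - z/2)/(1 + z/2)`. -/
theorem crank_nicolson_bound_large_z
    (δ₁ : ℝ) (hδ : δ₁ ∈ Set.Ioo 0 (π / 2)) :
    ∃ c > (0 : ℝ), ∃ C > (0 : ℝ), ∃ R > (0 : ℝ), ∀ n : ℕ, 1 ≤ n → ∀ z : ℂ,
      |z.arg| ≤ δ₁ → R ≤ ‖z‖ →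
      ‖Complex.exp (-(n : ℂ) * z) - ((1 - z / 2) / (1 + z / 2)) ^ n‖ ≤
        C * Real.exp (-(c * n / ‖z‖)) := by
  obtain ⟨hδ0, hδπ⟩ := hδ
  have hc0 : 0 < Real.cos δ₁ := Real.cos_pos_of_mem_Ioo ⟨by linarith [Real.pi_pos], hδπ⟩
  have hc1 : Real.cos δ₁ ≤ 1 := Real.cos_le_one _
  refine ⟨Real.cos δ₁, hc0, 2, by norm_num, 2, by norm_num, ?_⟩
  intro n hn z harg hR
  set c := Real.cos δ₁ with hcdef
  set A := ‖z‖ with hAdef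
  have hA2 : (2 : ℝ) ≤ A := hR
  have hA0 : 0 < A := by linarith
  have hz0 : z ≠ 0 := by
    intro h
    rw [h] at hAdef
    simp at hAdef
    linarith
  -- Re z ≥ A c
  have hcosarg : c ≤ Real.cos z.arg := by
    rw [← Real.cos_abs]
    exact Real.cos_le_cos_of_nonneg_of_le_pi (abs_nonneg _)
      (by linarith [Real.pi_pos]) harg
  have hre : A * c ≤ z.re := by
    have h := Complex.cos_arg hz0
    have : A * c ≤ A * Real.cos z.arg := by
      apply mul_le_mul_of_nonneg_left hcosarg hA0.le
    rw [h] at this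
    rwa [mul_div_cancel₀ _ (ne_of_gt hA0)] at this
  have ha0 : 0 < z.re := lt_of_lt_of_le (by positivity) hre
  have haA : z.re ≤ A := Complex.re_le_norm z
  -- normSq computations
  have hAsq : A ^ 2 = Complex.normSq z := Complex.sq_norm z
  have h1 : Complex.normSq (1 - z / 2) = 1 + A ^ 2 / 4 - z.re := by
    rw [hAsq]
    simp [Complex.normSq_apply, Complex.sub_re, Complex.sub_im, Complex.div_re,
      Complex.div_im]
    ring
  have h2 : Complex.normSq (1 + z / 2) = 1 + A ^ 2 / 4 + z.re := by
    rw [hAsq]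
    simp [Complex.normSq_apply, Complex.add_re, Complex.add_im, Complex.div_re,
      Complex.div_im]
    ring
  have hm : (0 : ℝ) < 1 + A ^ 2 / 4 + z.re := by positivity
  -- bound on |r(z)|
  have hrbound : ‖(1 - z / 2) / (1 + z / 2)‖ ≤ Real.exp (-(c / A)) := by
    have hsq : (‖(1 - z / 2) / (1 + z / 2)‖) ^ 2
        = (1 + A ^ 2 / 4 - z.re) / (1 + A ^ 2 / 4 + z.re) := by
      rw [Complex.sq_norm, Complex.normSq_div, h1, h2]
    have key : (1 + A ^ 2 / 4 - z.re) / (1 + A ^ 2 / 4 + z.re)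
        ≤ Real.exp (-(2 * c / A)) := by
      have step1 : (1 + A ^ 2 / 4 - z.re) / (1 + A ^ 2 / 4 + z.re)
          ≤ Real.exp (-(2 * z.re / (1 + A ^ 2 / 4 + z.re))) := by
        have := Real.add_one_le_exp (-(2 * z.re / (1 + A ^ 2 / 4 + z.re)))
        have heq : (1 + A ^ 2 / 4 - z.re) / (1 + A ^ 2 / 4 + z.re)
            = -(2 * z.re / (1 + A ^ 2 / 4 + z.re)) + 1 := by
          field_simp
          ring
        rw [heq]
        exact this
      have step2 : Real.exp (-(2 * z.re / (1 + A ^ 2 / 4 + z.re)))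
          ≤ Real.exp (-(2 * c / A)) := by
        apply Real.exp_le_exp.mpr
        apply neg_le_neg
        rw [div_le_div_iff₀ hA0 hm]
        nlinarith [mul_le_mul_of_nonneg_left hre hA0.le, sq_nonneg (A - 2)]
      exact step1.trans step2
    have hxa : (0 : ℝ) ≤ ‖(1 - z / 2) / (1 + z / 2)‖ :=
      norm_nonneg _
    have hyb : (0 : ℝ) ≤ Real.exp (-(c / A)) := (Real.exp_pos _).le
    have hsq2 : (‖(1 - z / 2) / (1 + z / 2)‖) ^ 2
        ≤ (Real.exp (-(c / A))) ^ 2 := by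
      rw [hsq, ← Real.exp_nat_mul]
      have : ((2 : ℕ) : ℝ) * (-(c / A)) = -(2 * c / A) := by push_cast; ring
      rw [this]
      exact key
    exact (pow_le_pow_iff_left₀ hxa hyb (by norm_num)).mp hsq2
  -- assemble
  have hterm2 : ‖((1 - z / 2) / (1 + z / 2)) ^ n‖
      ≤ Real.exp (-(c * n / A)) := by
    rw [norm_pow]
    calc (‖(1 - z / 2) / (1 + z / 2)‖) ^ n
        ≤ (Real.exp (-(c / A))) ^ n :=
          pow_le_pow_left₀ (norm_nonneg _) hrbound n
      _ = Real.exp (-(c * n / A)) := by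
          rw [← Real.exp_nat_mul]
          congr 1
          ring
  have hterm1 : ‖Complex.exp (-(n : ℂ) * z)‖ ≤ Real.exp (-(c * n / A)) := by
    rw [Complex.norm_exp]
    apply Real.exp_le_exp.mpr
    have hre' : (-(n : ℂ) * z).re = -(n * z.re) := by simp
    rw [hre']
    rw [neg_le_neg_iff]
    have hn1 : (1 : ℝ) ≤ (n : ℝ) := by exact_mod_cast hn
    have hcA : c / A ≤ z.re := by
      have h1' : c / A ≤ c * A := by
        rw [div_le_iff₀ hA0]
        have h4 : (1 : ℝ) ≤ A * A := by nlinarith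
        nlinarith [mul_le_mul_of_nonneg_left h4 hc0.le]
      have h2' : c * A ≤ z.re := by linarith [hre]
      linarith
    calc c * n / A = (n : ℝ) * (c / A) := by ring
      _ ≤ (n : ℝ) * z.re := by
          apply mul_le_mul_of_nonneg_left hcA (by positivity)
  calc ‖Complex.exp (-(n : ℂ) * z) - ((1 - z / 2) / (1 + z / 2)) ^ n‖
      ≤ ‖Complex.exp (-(n : ℂ) * z)‖
        + ‖((1 - z / 2) / (1 + z / 2)) ^ n‖ := by
        exact norm_sub_le (Complex.exp (-(n : ℂ) * z)) (((1 - z / 2) / (1 + z / 2)) ^ n)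
    _ ≤ Real.exp (-(c * n / A)) + Real.exp (-(c * n / A)) := add_le_add hterm1 hterm2
    _ = 2 * Real.exp (-(c * n / A)) := by ring
end

section
/- Let H be a Hilbert space, E(t) = e^{−tA} an analytic semigroup generated by a sectorial operator −A with smoothing ‖A^γ E(t)‖ ≤ C t^{−γ} for γ ∈ [0, 3/2], and let B(s) = (I + sA)^{−1} with ‖A^γ B(s)^{n}‖ ≤ C n^{−γ} s^{−γ}. Then for n ≥ 1 and τ > 0, the backward-Euler error operator satisfies the integral identity E(nτ) − (I+τA)^{−n} = −∫₀^τ n s A² E(n(τ−s)) (I+sA)^{−n−1} ds, and consequently ‖(E(nτ) − (I+τA)^{−n}) v‖ ≤ C τ ‖A v‖ for every v ∈ D(A). -/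
open Real MeasureTheory

namespace BEaux

set_option linter.unusedSectionVars false
set_option synthInstance.maxHeartbeats 1000000
set_option maxHeartbeats 1000000

lemma pow_step {R : Type*} [Ring R] [Module ℝ R] [IsScalarTower ℝ R R] [SMulCommClass ℝ R R] {a b : R} (h : Commute a b) (k : ℕ) :
    -((k : ℝ) • (a * b ^ (k + 1))) * b + b ^ k * -(a * (b * b)) =
      -(((k + 1 : ℕ) : ℝ) • (a * b ^ (k + 1 + 1))) := by
  have h1 : -((k : ℝ) • (a * b ^ (k + 1))) * b = -((k : ℝ) • (a * b ^ (k + 2))) := by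
    rw [neg_mul, smul_mul_assoc, mul_assoc, ← pow_succ]
  have h2 : b ^ k * (a * (b * b)) = a * b ^ (k + 2) := by
    calc b ^ k * (a * (b * b)) = (b ^ k * a) * (b * b) := by rw [mul_assoc]
      _ = (a * b ^ k) * (b * b) := by rw [(h.symm.pow_left k).eq]
      _ = a * b ^ (k + 2) := by rw [mul_assoc, ← mul_assoc (b ^ k), ← pow_succ, ← pow_succ]
  rw [h1, mul_neg, h2, ← neg_add]
  congr 1
  push_cast
  rw [add_smul, one_smul]

variable {H : Type*} [NormedAddCommGroup H] [InnerProductSpace ℂ H] [CompleteSpace H]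

lemma commute_inverse {a x : H →L[ℂ] H} (h : Commute a x) (hx : IsUnit x) :
    Commute a (Ring.inverse x) := by
  unfold Commute SemiconjBy
  calc a * Ring.inverse x = (Ring.inverse x * x) * a * Ring.inverse x := by
        rw [Ring.inverse_mul_cancel _ hx, one_mul]
    _ = Ring.inverse x * (x * a) * Ring.inverse x := by rw [mul_assoc (Ring.inverse x) x a]
    _ = Ring.inverse x * (a * x) * Ring.inverse x := by rw [← h.eq]
    _ = Ring.inverse x * a * (x * Ring.inverse x) := by noncomm_ring
    _ = Ring.inverse x * a := by rw [Ring.mul_inverse_cancel _ hx, mul_one]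

variable (A : H →L[ℂ] H)

lemma commute_A_unit (s : ℝ) : Commute A (1 + (s : ℂ) • A) :=
  (Commute.one_right A).add_right ((Commute.refl A).smul_right _)

lemma commute_A_B {s : ℝ} (hu : IsUnit (1 + (s : ℂ) • A)) :
    Commute A (Ring.inverse (1 + (s : ℂ) • A)) :=
  commute_inverse (commute_A_unit A s) hu

lemma hasDerivAt_affine (s : ℝ) :
    HasDerivAt (fun u : ℝ => (1 + (u : ℂ) • A : H →L[ℂ] H)) A s := by
  have h : HasDerivAt (fun u : ℝ => (u : ℂ) • A) A s := by
    have h0 := (hasDerivAt_id s).smul_const A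
    simp only [one_smul] at h0
    have : (fun u : ℝ => (u : ℂ) • A) = fun u : ℝ => u • A := by
      funext u; exact Complex.coe_smul u A
    rw [this]; exact h0
  simpa using h.const_add 1

lemma hasDerivAt_B {s : ℝ} (hu : IsUnit (1 + (s : ℂ) • A)) :
    HasDerivAt (fun u : ℝ => (Ring.inverse (1 + (u : ℂ) • A) : H →L[ℂ] H))
      (-(A * (Ring.inverse (1 + (s : ℂ) • A) * Ring.inverse (1 + (s : ℂ) • A)))) s := by
  have hfd := (hasFDerivAt_ringInverse (𝕜 := ℂ) hu.unit).restrictScalars ℝ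
  rw [show ((hu.unit : H →L[ℂ] H)) = 1 + (s : ℂ) • A from hu.unit_spec] at hfd
  have hcomp := hfd.comp_hasDerivAt s (hasDerivAt_affine A s)
  have hB : ((hu.unit⁻¹ : (H →L[ℂ] H)ˣ) : H →L[ℂ] H) = Ring.inverse (1 + (s : ℂ) • A) := by
    rw [← Ring.inverse_unit hu.unit, hu.unit_spec]
  have hval : (ContinuousLinearMap.restrictScalars ℝ
        (-(ContinuousLinearMap.mulLeftRight ℂ (H →L[ℂ] H) ↑hu.unit⁻¹) ↑hu.unit⁻¹)) A
      = -(A * (Ring.inverse (1 + (s : ℂ) • A) * Ring.inverse (1 + (s : ℂ) • A))) := by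
    rw [show (ContinuousLinearMap.restrictScalars ℝ
        (-(ContinuousLinearMap.mulLeftRight ℂ (H →L[ℂ] H) ↑hu.unit⁻¹) ↑hu.unit⁻¹)) A
      = -(↑hu.unit⁻¹ * A * ↑hu.unit⁻¹) from rfl, hB]
    rw [show Ring.inverse (1 + (s : ℂ) • A) * A * Ring.inverse (1 + (s : ℂ) • A)
        = A * (Ring.inverse (1 + (s : ℂ) • A) * Ring.inverse (1 + (s : ℂ) • A)) by
      rw [← (commute_A_B A hu).eq]; noncomm_ring]
  rw [← hval]
  exact hcomp

lemma hasDerivAt_B_pow {s : ℝ} (hu : IsUnit (1 + (s : ℂ) • A)) (n : ℕ) :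
    HasDerivAt (fun u : ℝ => (Ring.inverse (1 + (u : ℂ) • A) : H →L[ℂ] H) ^ n)
      (-((n : ℝ) • (A * (Ring.inverse (1 + (s : ℂ) • A)) ^ (n + 1)))) s := by
  induction n with
  | zero => simpa using hasDerivAt_const s (1 : H →L[ℂ] H)
  | succ k ih =>
      have h := ih.fun_mul (hasDerivAt_B A hu)
      rw [pow_step (commute_A_B A hu) k] at h
      simpa only [← pow_succ] using h



namespace Part1

variable {H : Type*} [NormedAddCommGroup H] [InnerProductSpace ℂ H] [CompleteSpace H]
variable (A : H →L[ℂ] H) (E : ℝ → (H →L[ℂ] H))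

lemma hunit (A : H →L[ℂ] H) (hinv : ∀ s : ℝ, 0 < s → IsUnit (1 + (s : ℂ) • A))
    {s : ℝ} (hs : 0 ≤ s) : IsUnit (1 + (s : ℂ) • A) := by
  rcases eq_or_lt_of_le hs with h | h
  · simp [← h]
  · exact hinv s h

lemma commute_A_E (hE : ∀ t : ℝ, E t = NormedSpace.exp (-((t : ℂ) • A))) (t : ℝ) :
    Commute A (E t) := by
  rw [hE]
  exact (((Commute.refl A).smul_right _).neg_right).exp_right

lemma hasDerivAt_E (hE : ∀ t : ℝ, E t = NormedSpace.exp (-((t : ℂ) • A))) (t : ℝ) :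
    HasDerivAt E (-(A * E t)) t := by
  have hfun : E = fun u : ℝ => NormedSpace.exp ((u : ℂ) • (-A)) := by
    funext u; rw [hE u, ← smul_neg]
  have goal' : HasDerivAt (fun u : ℝ => NormedSpace.exp ((u : ℂ) • (-A)))
      (-(A * NormedSpace.exp ((t : ℂ) • (-A)))) t := by
    have h1 : HasDerivAt (fun z : ℂ => NormedSpace.exp (z • (-A)))
        (NormedSpace.exp ((t : ℂ) • (-A)) * (-A)) ((t : ℂ)) :=
      hasDerivAt_exp_smul_const (-A) _
    have h2 : HasDerivAt (fun u : ℝ => (u : ℂ)) 1 t := by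
      simpa using (hasDerivAt_id t).ofReal_comp
    have h3 := h1.scomp t h2
    simp only [Function.comp, one_smul, mul_neg] at h3
    have hc : Commute A (NormedSpace.exp ((t : ℂ) • (-A))) :=
      (((Commute.refl A).neg_right).smul_right (t : ℂ)).exp_right
    rw [← hc.eq] at h3
    exact h3
  have hEt : NormedSpace.exp ((t : ℂ) • (-A)) = E t := by rw [hE t, ← smul_neg]
  rw [hfun]
  rw [hfun] at hEt
  rw [← hEt]
  exact goal'

lemma continuous_E (hE : ∀ t : ℝ, E t = NormedSpace.exp (-((t : ℂ) • A))) :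
    Continuous E := by
  have : E = fun t : ℝ => NormedSpace.exp (-((t : ℂ) • A)) := funext hE
  rw [this]
  rw [← this]; exact continuous_iff_continuousAt.2 fun t => (hasDerivAt_E A E hE t).continuousAt

end Part1


namespace Part1
variable {H : Type*} [NormedAddCommGroup H] [InnerProductSpace ℂ H] [CompleteSpace H]
variable (A : H →L[ℂ] H) (E : ℝ → (H →L[ℂ] H))

lemma Bpow_diff {s : ℝ} (hu : IsUnit (1 + (s : ℂ) • A)) (n : ℕ) :
    Ring.inverse (1 + (s : ℂ) • A) ^ n - Ring.inverse (1 + (s : ℂ) • A) ^ (n + 1)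
      = (s : ℂ) • (A * Ring.inverse (1 + (s : ℂ) • A) ^ (n + 1)) := by
  set b := (Ring.inverse (1 + (s : ℂ) • A) : H →L[ℂ] H) with hb
  have h1 : b ^ (n + 1) * (1 + (s : ℂ) • A) = b ^ n := by
    rw [pow_succ, mul_assoc, hb, Ring.inverse_mul_cancel _ hu, mul_one]
  have h2 : b ^ (n + 1) * (1 + (s : ℂ) • A) = b ^ (n + 1) + (s : ℂ) • (b ^ (n + 1) * A) := by
    rw [mul_add, mul_one, mul_smul_comm]
  have h3 : b ^ (n + 1) * A = A * b ^ (n + 1) :=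
    ((commute_A_B A hu).pow_right (n + 1)).eq.symm
  rw [h2, h3] at h1
  rw [← h1]
  abel

lemma deriv_combine {s : ℝ} (hu : IsUnit (1 + (s : ℂ) • A)) (e : H →L[ℂ] H)
    (hae : Commute A e) (n : ℕ) :
    ((n : ℝ) • (A * e)) * Ring.inverse (1 + (s : ℂ) • A) ^ n
      + e * (-((n : ℝ) • (A * Ring.inverse (1 + (s : ℂ) • A) ^ (n + 1))))
    = (((n : ℝ) * s : ℝ) : ℂ) • (A * A * e * Ring.inverse (1 + (s : ℂ) • A) ^ (n + 1)) := by
  set b := (Ring.inverse (1 + (s : ℂ) • A) : H →L[ℂ] H) with hb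
  have hab : Commute A b := commute_A_B A hu
  have h1 : ((n : ℝ) • (A * e)) * b ^ n = (n : ℝ) • (A * e * b ^ n) := by
    rw [smul_mul_assoc]
  have h2 : e * (-((n : ℝ) • (A * b ^ (n + 1)))) = -((n : ℝ) • (A * e * b ^ (n + 1))) := by
    have he : e * (A * b ^ (n + 1)) = A * e * b ^ (n + 1) := by
      rw [← mul_assoc, ← hae.eq]
    rw [mul_neg, mul_smul_comm, he]
  rw [h1, h2]
  have h4 : ((n : ℝ)) • (A * e * b ^ n) + -((n : ℝ) • (A * e * b ^ (n + 1)))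
      = (n : ℝ) • (A * e * (b ^ n - b ^ (n + 1))) := by
    rw [mul_sub, smul_sub, sub_eq_add_neg]
  rw [h4, Bpow_diff A hu n]
  have h5 : A * e * ((s : ℂ) • (A * b ^ (n + 1))) = (s : ℂ) • (A * A * e * b ^ (n + 1)) := by
    rw [mul_smul_comm]
    congr 1
    calc A * e * (A * b ^ (n + 1)) = A * (e * A) * b ^ (n + 1) := by
          rw [mul_assoc A e, mul_assoc, mul_assoc]
      _ = A * (A * e) * b ^ (n + 1) := by rw [← hae.eq]
      _ = A * A * e * b ^ (n + 1) := by rw [← mul_assoc A A e]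
  rw [h5, ← Complex.coe_smul, smul_smul]
  congr 1
  push_cast
  ring


lemma continuousAt_B {s : ℝ} (hu : IsUnit (1 + (s : ℂ) • A)) :
    ContinuousAt (fun u : ℝ => (Ring.inverse (1 + (u : ℂ) • A) : H →L[ℂ] H)) s :=
  (hasDerivAt_B A hu).continuousAt

lemma integrand_contOn (hE : ∀ t : ℝ, E t = NormedSpace.exp (-((t : ℂ) • A)))
    (hinv : ∀ s : ℝ, 0 < s → IsUnit (1 + (s : ℂ) • A)) (n m : ℕ) {τ : ℝ} (hτ : 0 < τ) :
    ContinuousOn (fun s : ℝ => (((n : ℝ) * s : ℝ) : ℂ) •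
      (A * A * E ((n : ℝ) * (τ - s)) * (Ring.inverse (1 + (s : ℂ) • A)) ^ m))
      (Set.Icc 0 τ) := by
  intro s hs
  apply ContinuousWithinAt.fun_smul
  · exact (Complex.continuous_ofReal.comp (continuous_const.mul continuous_id)).continuousWithinAt
  · apply ContinuousWithinAt.fun_mul
    · apply ContinuousWithinAt.fun_mul
      · exact continuousWithinAt_const
      · exact ((continuous_E A E hE).comp
          (continuous_const.mul (continuous_const.sub continuous_id))).continuousWithinAt
    · exact ((continuousAt_B A (hunit A hinv hs.1)).pow m).continuousWithinAt

lemma euler_identity (hE : ∀ t : ℝ, E t = NormedSpace.exp (-((t : ℂ) • A)))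
    (hinv : ∀ s : ℝ, 0 < s → IsUnit (1 + (s : ℂ) • A)) (n : ℕ) {τ : ℝ} (hτ : 0 < τ) :
    E ((n : ℝ) * τ) - (Ring.inverse (1 + (τ : ℂ) • A)) ^ n =
      -∫ s in (0 : ℝ)..τ, (((n : ℝ) * s : ℝ) : ℂ) •
        (A * A * E ((n : ℝ) * (τ - s)) * (Ring.inverse (1 + (s : ℂ) • A)) ^ (n + 1)) := by
  set f := fun s : ℝ => (((n : ℝ) * s : ℝ) : ℂ) •
    (A * A * E ((n : ℝ) * (τ - s)) * (Ring.inverse (1 + (s : ℂ) • A)) ^ (n + 1)) with hf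
  set F := fun s : ℝ => E ((n : ℝ) * (τ - s)) * (Ring.inverse (1 + (s : ℂ) • A)) ^ n with hF
  have hderiv : ∀ s ∈ Set.uIcc (0 : ℝ) τ, HasDerivAt F (f s) s := by
    intro s hs
    rw [Set.uIcc_of_le hτ.le] at hs
    have hu := hunit A hinv hs.1
    have hg : HasDerivAt (fun u : ℝ => (n : ℝ) * (τ - u)) (-(n : ℝ)) s := by
      have := ((hasDerivAt_id s).const_sub τ).const_mul (n : ℝ)
      simpa using this
    have h1 : HasDerivAt (fun u : ℝ => E ((n : ℝ) * (τ - u)))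
        ((n : ℝ) • (A * E ((n : ℝ) * (τ - s)))) s := by
      have := (hasDerivAt_E A E hE ((n : ℝ) * (τ - s))).scomp s hg
      simpa [Function.comp_def] using this
    have h2 := hasDerivAt_B_pow A hu n
    have h := h1.fun_mul h2
    rw [deriv_combine A hu _ (commute_A_E A E hE _) n] at h
    exact h
  have hint : IntervalIntegrable f MeasureTheory.volume 0 τ := by
    apply ContinuousOn.intervalIntegrable
    rw [Set.uIcc_of_le hτ.le]
    exact integrand_contOn A E hE hinv n (n + 1) hτ
  have hFTC := intervalIntegral.integral_eq_sub_of_hasDerivAt hderiv hint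
  have hFτ : F τ = (Ring.inverse (1 + (τ : ℂ) • A)) ^ n := by
    have h0 : (n : ℝ) * (τ - τ) = 0 := by ring
    rw [hF]
    simp only [h0]
    rw [hE 0]
    norm_num [NormedSpace.exp_zero]
  have hF0 : F 0 = E ((n : ℝ) * τ) := by
    rw [hF]
    norm_num [Ring.inverse_one]
  rw [hFTC, hFτ, hF0, neg_sub]


lemma norm_coe_smul {X : Type*} [NormedAddCommGroup X] [NormedSpace ℂ X]
    {x : ℝ} (hx : 0 ≤ x) (T : X) : ‖((x : ℝ) : ℂ) • T‖ = x * ‖T‖ := by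
  rw [norm_smul, Complex.norm_real, Real.norm_eq_abs, abs_of_nonneg hx]

lemma factor1 {R : Type*} [Ring R] {a e : R} (hae : Commute a e) (b : R) :
    a * a * e * b = (a * e) * (a * b) := by
  calc a * a * e * b = a * (a * e) * b := by rw [mul_assoc a a e]
    _ = a * (e * a) * b := by rw [hae.eq]
    _ = (a * e) * (a * b) := by noncomm_ring

lemma factor3 {R : Type*} [Ring R] {a e b : R} (hae : Commute a e) (hab : Commute a b) (n : ℕ) :
    a * a * e * b ^ (n + 1) = e * ((a * b) * (a * b ^ n)) := by
  have h1 : (a * b) * (a * b ^ n) = a * a * b ^ (n + 1) := by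
    calc (a * b) * (a * b ^ n) = a * (b * a) * b ^ n := by noncomm_ring
      _ = a * (a * b) * b ^ n := by rw [← hab.eq]
      _ = a * a * (b * b ^ n) := by noncomm_ring
      _ = a * a * b ^ (n + 1) := by rw [← pow_succ']
  rw [h1]
  calc a * a * e * b ^ (n + 1) = a * (a * e) * b ^ (n + 1) := by rw [mul_assoc a a e]
    _ = a * (e * a) * b ^ (n + 1) := by rw [hae.eq]
    _ = (a * e) * (a * b ^ (n + 1)) := by noncomm_ring
    _ = (e * a) * (a * b ^ (n + 1)) := by rw [← hae.eq]
    _ = e * (a * a * b ^ (n + 1)) := by noncomm_ring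

lemma factor4 {R : Type*} [Ring R] {a e b : R} (hae : Commute a e) (hab : Commute a b) (m : ℕ) :
    a * a * e * b ^ m = (a * e * b ^ m) * a := by
  have h := (hab.pow_right m).eq
  calc a * a * e * b ^ m = a * (a * e) * b ^ m := by rw [mul_assoc a a e]
    _ = a * (e * a) * b ^ m := by rw [hae.eq]
    _ = (a * e) * (a * b ^ m) := by noncomm_ring
    _ = (a * e) * (b ^ m * a) := by rw [h]
    _ = (a * e * b ^ m) * a := by noncomm_ring

lemma factor5 {R : Type*} [Ring R] {a e b : R} (hae : Commute a e) (hab : Commute a b) (m : ℕ) :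
    a * a * e * b ^ m = (e * (a * b ^ m)) * a := by
  have h := (hab.pow_right m).eq
  calc a * a * e * b ^ m = (a * e * b ^ m) * a := factor4 hae hab m
    _ = ((a * e) * b ^ m) * a := by noncomm_ring
    _ = ((e * a) * b ^ m) * a := by rw [← hae.eq]
    _ = (e * (a * b ^ m)) * a := by noncomm_ring

section Estimates

variable (C : ℝ)
variable (Apow : ℝ → (H →L[ℂ] H))

lemma hAE (hA1 : Apow 1 = A)
    (hsmoothE : ∀ γ ∈ Set.Icc (0 : ℝ) (3 / 2), ∀ t : ℝ, 0 < t →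
      ‖Apow γ * E t‖ ≤ C * t ^ (-γ)) :
    ∀ t : ℝ, 0 < t → ‖A * E t‖ ≤ C / t := by
  intro t ht
  have := hsmoothE 1 (by norm_num) t ht
  rw [hA1] at this
  rwa [Real.rpow_neg_one, ← div_eq_mul_inv] at this

lemma hAB (hA1 : Apow 1 = A)
    (hsmoothB : ∀ γ ∈ Set.Icc (0 : ℝ) (3 / 2), ∀ n : ℕ, 1 ≤ n → ∀ s : ℝ, 0 < s →
      ‖Apow γ * (Ring.inverse (1 + (s : ℂ) • A)) ^ n‖ ≤ C * (n : ℝ) ^ (-γ) * s ^ (-γ)) :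
    ∀ m : ℕ, 1 ≤ m → ∀ s : ℝ, 0 < s →
      ‖A * (Ring.inverse (1 + (s : ℂ) • A)) ^ m‖ ≤ C / ((m : ℝ) * s) := by
  intro m hm s hs
  have := hsmoothB 1 (by norm_num) m hm s hs
  rw [hA1] at this
  rw [Real.rpow_neg_one, Real.rpow_neg_one] at this
  calc ‖A * (Ring.inverse (1 + (s : ℂ) • A)) ^ m‖ ≤ C * (m : ℝ)⁻¹ * s⁻¹ := this
    _ = C / ((m : ℝ) * s) := by
        rw [div_eq_mul_inv, mul_inv]
        ring

variable {C}

lemma normB (hC : 0 < C) (hA1 : Apow 1 = A)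
    (hsmoothB : ∀ γ ∈ Set.Icc (0 : ℝ) (3 / 2), ∀ n : ℕ, 1 ≤ n → ∀ s : ℝ, 0 < s →
      ‖Apow γ * (Ring.inverse (1 + (s : ℂ) • A)) ^ n‖ ≤ C * (n : ℝ) ^ (-γ) * s ^ (-γ))
    {s : ℝ} (hs : 0 < s) (hu : IsUnit (1 + (s : ℂ) • A)) :
    ‖(Ring.inverse (1 + (s : ℂ) • A) : H →L[ℂ] H)‖ ≤ 1 + C := by
  set b := (Ring.inverse (1 + (s : ℂ) • A) : H →L[ℂ] H) with hb
  have h1 : b * (1 + (s : ℂ) • A) = 1 := Ring.inverse_mul_cancel _ hu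
  have h2 : b + (s : ℂ) • (A * b) = 1 := by
    rw [← h1, mul_add, mul_one, mul_smul_comm, (commute_A_B A hu).eq]
  have h3 : b = 1 - (s : ℂ) • (A * b) := by rw [← h2]; abel
  have h4 : ‖(s : ℂ) • (A * b)‖ ≤ C := by
    have hab := hAB A C Apow hA1 hsmoothB 1 le_rfl s hs
    rw [pow_one] at hab
    rw [norm_coe_smul hs.le]
    calc s * ‖A * b‖ ≤ s * (C / ((1 : ℝ) * s)) := by
          apply mul_le_mul_of_nonneg_left _ hs.le
          simpa [hb] using hab
      _ = C := by field_simp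
  calc ‖b‖ = ‖1 - (s : ℂ) • (A * b)‖ := by rw [← h3]
    _ ≤ ‖(1 : H →L[ℂ] H)‖ + ‖(s : ℂ) • (A * b)‖ := norm_sub_le _ _
    _ ≤ 1 + C := by
        refine add_le_add ?_ h4
        rw [ContinuousLinearMap.one_def]
        exact ContinuousLinearMap.norm_id_le

lemma ftc2_combine (e : H →L[ℂ] H) (hae : Commute A e) (r : ℝ) :
    (-(A * e)) * (1 + (r : ℂ) • A) + e * A = -((r : ℂ) • (A * A * e)) := by
  have key : (A * e) * A = A * A * e := by
    calc (A * e) * A = A * (e * A) := by rw [mul_assoc]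
      _ = A * (A * e) := by rw [← hae.eq]
      _ = A * A * e := by rw [mul_assoc]
  have expand : (A * e) * (1 + (r : ℂ) • A) = A * e + (r : ℂ) • (A * A * e) := by
    rw [mul_add, mul_one, mul_smul_comm, key]
  rw [neg_mul, expand, ← hae.eq]
  abel

lemma ftc2_identity (hE : ∀ t : ℝ, E t = NormedSpace.exp (-((t : ℂ) • A)))
    (hinv : ∀ s : ℝ, 0 < s → IsUnit (1 + (s : ℂ) • A)) {τ : ℝ} (hτ : 0 < τ) :
    E τ - Ring.inverse (1 + (τ : ℂ) • A) =
      -∫ r in (0 : ℝ)..τ, ((r : ℝ) : ℂ) •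
        (A * A * E r * Ring.inverse (1 + (τ : ℂ) • A)) := by
  set b := (Ring.inverse (1 + (τ : ℂ) • A) : H →L[ℂ] H) with hb
  set g := fun r : ℝ => ((r : ℝ) : ℂ) • (A * A * E r * b) with hg
  have hderiv : ∀ r ∈ Set.uIcc (0 : ℝ) τ, HasDerivAt
      (fun r : ℝ => E r * (1 + (r : ℂ) • A) * b) (-(g r)) r := by
    intro r _
    have h := ((hasDerivAt_E A E hE r).mul (hasDerivAt_affine A r)).mul_const b
    rw [ftc2_combine A _ (commute_A_E A E hE r) r] at h
    have : (-((r : ℂ) • (A * A * E r))) * b = -(g r) := by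
      rw [hg, neg_mul, smul_mul_assoc]
    rw [this] at h
    exact h
  have hcont : Continuous g := by
    apply Continuous.fun_smul
    · exact Complex.continuous_ofReal
    · exact (continuous_const.mul (continuous_E A E hE)).mul continuous_const
  have hint : IntervalIntegrable (fun r => -(g r)) MeasureTheory.volume 0 τ :=
    (hcont.neg).intervalIntegrable 0 τ
  have hFTC := intervalIntegral.integral_eq_sub_of_hasDerivAt hderiv hint
  rw [intervalIntegral.integral_neg] at hFTC
  have hΨτ : E τ * (1 + (τ : ℂ) • A) * b = E τ := by
    rw [mul_assoc, hb, Ring.mul_inverse_cancel _ (hinv τ hτ), mul_one]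
  rw [hΨτ] at hFTC
  have h0 : E 0 * (1 + ((0 : ℝ) : ℂ) • A) * b = b := by
    rw [hE 0]
    norm_num [NormedSpace.exp_zero]
  rw [h0] at hFTC
  exact hFTC.symm

lemma normE (hC : 0 < C) (hE : ∀ t : ℝ, E t = NormedSpace.exp (-((t : ℂ) • A)))
    (hinv : ∀ s : ℝ, 0 < s → IsUnit (1 + (s : ℂ) • A))
    (hA1 : Apow 1 = A)
    (hsmoothE : ∀ γ ∈ Set.Icc (0 : ℝ) (3 / 2), ∀ t : ℝ, 0 < t →
      ‖Apow γ * E t‖ ≤ C * t ^ (-γ))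
    (hsmoothB : ∀ γ ∈ Set.Icc (0 : ℝ) (3 / 2), ∀ n : ℕ, 1 ≤ n → ∀ s : ℝ, 0 < s →
      ‖Apow γ * (Ring.inverse (1 + (s : ℂ) • A)) ^ n‖ ≤ C * (n : ℝ) ^ (-γ) * s ^ (-γ))
    {t : ℝ} (ht : 0 ≤ t) : ‖E t‖ ≤ 1 + C + C ^ 2 := by
  rcases eq_or_lt_of_le ht with h0 | htpos
  · rw [← h0, hE 0]
    have : NormedSpace.exp (-(((0 : ℝ) : ℂ) • A)) = 1 := by
      norm_num [NormedSpace.exp_zero]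
    rw [this]
    have h1 : ‖(1 : H →L[ℂ] H)‖ ≤ 1 := by
      rw [ContinuousLinearMap.one_def]; exact ContinuousLinearMap.norm_id_le
    nlinarith
  · set b := (Ring.inverse (1 + (t : ℂ) • A) : H →L[ℂ] H) with hb
    have hu := hinv t htpos
    have hEB : ‖E t - b‖ ≤ C ^ 2 := by
      rw [ftc2_identity A E hE hinv htpos, norm_neg]
      have hbd : ∀ r ∈ Set.uIoc (0 : ℝ) t,
          ‖((r : ℝ) : ℂ) • (A * A * E r * b)‖ ≤ C ^ 2 / t := by
        intro r hr
        rw [Set.uIoc_of_le htpos.le] at hr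
        have hr0 : 0 < r := hr.1
        rw [norm_coe_smul hr0.le]
        have hfac : A * A * E r * b = (A * E r) * (A * b) :=
          factor1 (commute_A_E A E hE r) b
        have h1 : ‖A * E r‖ ≤ C / r := hAE A E C Apow hA1 hsmoothE r hr0
        have h2 : ‖A * b‖ ≤ C / ((1 : ℝ) * t) := by
          have := hAB A C Apow hA1 hsmoothB 1 le_rfl t htpos
          simpa [hb] using this
        calc r * ‖A * A * E r * b‖ = r * ‖(A * E r) * (A * b)‖ := by rw [hfac]
          _ ≤ r * (‖A * E r‖ * ‖A * b‖) := by
              apply mul_le_mul_of_nonneg_left (norm_mul_le _ _) hr0.le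
          _ ≤ r * ((C / r) * (C / ((1 : ℝ) * t))) := by
              apply mul_le_mul_of_nonneg_left _ hr0.le
              exact mul_le_mul h1 h2 (norm_nonneg _) (by positivity)
          _ = C ^ 2 / t := by field_simp
      have := intervalIntegral.norm_integral_le_of_norm_le_const hbd
      calc ‖∫ r in (0 : ℝ)..t, ((r : ℝ) : ℂ) • (A * A * E r * b)‖
          ≤ C ^ 2 / t * |t - 0| := this
        _ = C ^ 2 := by
            rw [sub_zero, abs_of_pos htpos]
            field_simp
    have hBb : ‖b‖ ≤ 1 + C := normB A Apow hC hA1 hsmoothB htpos hu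
    calc ‖E t‖ = ‖(E t - b) + b‖ := by norm_num
      _ ≤ ‖E t - b‖ + ‖b‖ := norm_add_le _ _
      _ ≤ C ^ 2 + (1 + C) := add_le_add hEB hBb
      _ = 1 + C + C ^ 2 := by ring


lemma two_piece {X : Type*} [NormedAddCommGroup X] [NormedSpace ℝ X] {f : ℝ → X} {τ K₁ K₂ : ℝ}
    (hτ : 0 < τ) (hf : IntervalIntegrable f MeasureTheory.volume 0 τ)
    (h1 : ∀ s ∈ Set.Ioc (0 : ℝ) (τ / 2), ‖f s‖ ≤ K₁)
    (h2 : ∀ s ∈ Set.Ioc (τ / 2) τ, ‖f s‖ ≤ K₂) :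
    ‖∫ s in (0 : ℝ)..τ, f s‖ ≤ (K₁ + K₂) * (τ / 2) := by
  have hsub1 : IntervalIntegrable f MeasureTheory.volume 0 (τ / 2) := by
    apply hf.mono_set
    rw [Set.uIcc_of_le (by linarith), Set.uIcc_of_le hτ.le]
    exact Set.Icc_subset_Icc le_rfl (by linarith)
  have hsub2 : IntervalIntegrable f MeasureTheory.volume (τ / 2) τ := by
    apply hf.mono_set
    rw [Set.uIcc_of_le (by linarith), Set.uIcc_of_le hτ.le]
    exact Set.Icc_subset_Icc (by linarith) le_rfl
  have hsplit := intervalIntegral.integral_add_adjacent_intervals hsub1 hsub2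
  rw [← hsplit]
  have hb1 : ‖∫ s in (0 : ℝ)..(τ / 2), f s‖ ≤ K₁ * |τ / 2 - 0| := by
    apply intervalIntegral.norm_integral_le_of_norm_le_const
    intro s hs
    rw [Set.uIoc_of_le (by linarith)] at hs
    exact h1 s hs
  have hb2 : ‖∫ s in (τ / 2)..τ, f s‖ ≤ K₂ * |τ - τ / 2| := by
    apply intervalIntegral.norm_integral_le_of_norm_le_const
    intro s hs
    rw [Set.uIoc_of_le (by linarith)] at hs
    exact h2 s hs
  rw [sub_zero, abs_of_pos (by linarith)] at hb1
  rw [show τ - τ / 2 = τ / 2 by ring, abs_of_pos (by linarith)] at hb2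
  calc ‖(∫ s in (0 : ℝ)..(τ / 2), f s) + ∫ s in (τ / 2)..τ, f s‖
      ≤ ‖∫ s in (0 : ℝ)..(τ / 2), f s‖ + ‖∫ s in (τ / 2)..τ, f s‖ := norm_add_le _ _
    _ ≤ K₁ * (τ / 2) + K₂ * (τ / 2) := add_le_add hb1 hb2
    _ = (K₁ + K₂) * (τ / 2) := by ring

lemma normBn (hC : 0 < C) (hE : ∀ t : ℝ, E t = NormedSpace.exp (-((t : ℂ) • A)))
    (hinv : ∀ s : ℝ, 0 < s → IsUnit (1 + (s : ℂ) • A))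
    (hA1 : Apow 1 = A)
    (hsmoothE : ∀ γ ∈ Set.Icc (0 : ℝ) (3 / 2), ∀ t : ℝ, 0 < t →
      ‖Apow γ * E t‖ ≤ C * t ^ (-γ))
    (hsmoothB : ∀ γ ∈ Set.Icc (0 : ℝ) (3 / 2), ∀ n : ℕ, 1 ≤ n → ∀ s : ℝ, 0 < s →
      ‖Apow γ * (Ring.inverse (1 + (s : ℂ) • A)) ^ n‖ ≤ C * (n : ℝ) ^ (-γ) * s ^ (-γ))
    {n : ℕ} (hn : 1 ≤ n) {τ : ℝ} (hτ : 0 < τ) :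
    ‖(Ring.inverse (1 + (τ : ℂ) • A) : H →L[ℂ] H) ^ n‖ ≤
      (1 + C + C ^ 2) * (1 + C ^ 2) + C ^ 2 := by
  set M : ℝ := 1 + C + C ^ 2 with hM
  have hMpos : 0 < M := by positivity
  set f := fun s : ℝ => (((n : ℝ) * s : ℝ) : ℂ) •
    (A * A * E ((n : ℝ) * (τ - s)) * (Ring.inverse (1 + (s : ℂ) • A)) ^ (n + 1)) with hf
  have hint : IntervalIntegrable f MeasureTheory.volume 0 τ := by
    apply ContinuousOn.intervalIntegrable
    rw [Set.uIcc_of_le hτ.le]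
    exact integrand_contOn A E hE hinv n (n + 1) hτ
  have hnR : (1 : ℝ) ≤ (n : ℝ) := by exact_mod_cast hn
  have hnpos : (0 : ℝ) < (n : ℝ) := by linarith
  have hid := euler_identity A E hE hinv n hτ
  have hsum : (Ring.inverse (1 + (τ : ℂ) • A) : H →L[ℂ] H) ^ n
      = E ((n : ℝ) * τ) + ∫ s in (0 : ℝ)..τ, f s := by
    have : E ((n : ℝ) * τ) - (Ring.inverse (1 + (τ : ℂ) • A)) ^ n
        = -(∫ s in (0 : ℝ)..τ, f s) := hid
    have := sub_eq_iff_eq_add.mp this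
    -- this : E (n τ) = -∫ + B^n
    rw [this]
    abel
  -- bound the integral
  have hbound : ‖∫ s in (0 : ℝ)..τ, f s‖ ≤ (2 * C ^ 2 / τ + 2 * M * C ^ 2 / τ) * (τ / 2) := by
    apply two_piece hτ hint
    · -- s ∈ (0, τ/2]
      intro s hs
      obtain ⟨hs0, hs2⟩ := hs
      have hsτ : s < τ := lt_of_le_of_lt hs2 (by linarith)
      have hts : 0 < τ - s := by linarith
      have htpos : 0 < (n : ℝ) * (τ - s) := by positivity
      have hu := hinv s hs0
      simp only [hf]
      have hns : 0 ≤ (n : ℝ) * s := by positivity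
      rw [norm_coe_smul hns]
      have hfac : A * A * E ((n : ℝ) * (τ - s)) * (Ring.inverse (1 + (s : ℂ) • A)) ^ (n + 1)
          = (A * E ((n : ℝ) * (τ - s))) * (A * (Ring.inverse (1 + (s : ℂ) • A)) ^ (n + 1)) :=
        factor1 (commute_A_E A E hE _) _
      have h1 : ‖A * E ((n : ℝ) * (τ - s))‖ ≤ C / ((n : ℝ) * (τ - s)) :=
        hAE A E C Apow hA1 hsmoothE _ htpos
      have h2 : ‖A * (Ring.inverse (1 + (s : ℂ) • A)) ^ (n + 1)‖ ≤ C / (((n : ℕ) + 1 : ℝ) * s) := by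
        have := hAB A C Apow hA1 hsmoothB (n + 1) (by omega) s hs0
        rwa [show (((n + 1 : ℕ) : ℝ)) = ((n : ℕ) + 1 : ℝ) by push_cast; ring] at this
      calc (n : ℝ) * s * ‖A * A * E ((n : ℝ) * (τ - s)) *
              (Ring.inverse (1 + (s : ℂ) • A)) ^ (n + 1)‖
          ≤ (n : ℝ) * s * ((C / ((n : ℝ) * (τ - s))) * (C / (((n : ℕ) + 1 : ℝ) * s))) := by
            rw [hfac]
            apply mul_le_mul_of_nonneg_left _ hns
            exact (norm_mul_le _ _).trans
              (mul_le_mul h1 h2 (norm_nonneg _) (by positivity))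
        _ = C ^ 2 / (((n : ℕ) + 1 : ℝ) * (τ - s)) := by
            field_simp
        _ ≤ 2 * C ^ 2 / τ := by
            rw [div_le_div_iff₀ (by positivity) hτ]
            have e1 : (0:ℝ) ≤ C ^ 2 * (2 * (τ - s) - τ) :=
              mul_nonneg (sq_nonneg C) (by linarith)
            have e2 : (0:ℝ) ≤ (C ^ 2 * (2 * (τ - s))) * (n : ℝ) :=
              mul_nonneg (mul_nonneg (sq_nonneg C) (by linarith)) (by positivity)
            nlinarith [e1, e2]
    · -- s ∈ (τ/2, τ]
      intro s hs
      obtain ⟨hs2, hsτ⟩ := hs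
      have hs0 : 0 < s := by linarith
      have hu := hinv s hs0
      have hts : 0 ≤ (n : ℝ) * (τ - s) := by
        have : (0:ℝ) ≤ τ - s := by linarith
        positivity
      simp only [hf]
      have hns : 0 ≤ (n : ℝ) * s := by positivity
      rw [norm_coe_smul hns]
      have hfac : A * A * E ((n : ℝ) * (τ - s)) * (Ring.inverse (1 + (s : ℂ) • A)) ^ (n + 1)
          = E ((n : ℝ) * (τ - s)) * ((A * Ring.inverse (1 + (s : ℂ) • A)) *
              (A * (Ring.inverse (1 + (s : ℂ) • A)) ^ n)) :=
        factor3 (commute_A_E A E hE _) (commute_A_B A hu) n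
      have hEb : ‖E ((n : ℝ) * (τ - s))‖ ≤ M :=
        normE A E Apow hC hE hinv hA1 hsmoothE hsmoothB hts
      have h1 : ‖A * Ring.inverse (1 + (s : ℂ) • A)‖ ≤ C / ((1 : ℝ) * s) := by
        have := hAB A C Apow hA1 hsmoothB 1 le_rfl s hs0
        simpa using this
      have h2 : ‖A * (Ring.inverse (1 + (s : ℂ) • A)) ^ n‖ ≤ C / ((n : ℝ) * s) :=
        hAB A C Apow hA1 hsmoothB n hn s hs0
      calc (n : ℝ) * s * ‖A * A * E ((n : ℝ) * (τ - s)) *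
              (Ring.inverse (1 + (s : ℂ) • A)) ^ (n + 1)‖
          ≤ (n : ℝ) * s * (M * ((C / ((1 : ℝ) * s)) * (C / ((n : ℝ) * s)))) := by
            rw [hfac]
            apply mul_le_mul_of_nonneg_left _ hns
            refine (norm_mul_le _ _).trans ?_
            refine mul_le_mul hEb ((norm_mul_le _ _).trans ?_) (norm_nonneg _) hMpos.le
            exact mul_le_mul h1 h2 (norm_nonneg _) (by positivity)
        _ = M * C ^ 2 / s := by
            field_simp
        _ ≤ 2 * M * C ^ 2 / τ := by
            rw [div_le_div_iff₀ hs0 hτ]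
            have hkey : (0:ℝ) ≤ M * C ^ 2 * (2 * s - τ) :=
              mul_nonneg (mul_nonneg hMpos.le (sq_nonneg C)) (by linarith)
            nlinarith [hkey]
  have hEnorm : ‖E ((n : ℝ) * τ)‖ ≤ M :=
    normE A E Apow hC hE hinv hA1 hsmoothE hsmoothB (by positivity)
  calc ‖(Ring.inverse (1 + (τ : ℂ) • A) : H →L[ℂ] H) ^ n‖
      = ‖E ((n : ℝ) * τ) + ∫ s in (0 : ℝ)..τ, f s‖ := by rw [hsum]
    _ ≤ ‖E ((n : ℝ) * τ)‖ + ‖∫ s in (0 : ℝ)..τ, f s‖ := norm_add_le _ _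
    _ ≤ M + (2 * C ^ 2 / τ + 2 * M * C ^ 2 / τ) * (τ / 2) := add_le_add hEnorm hbound
    _ = M * (1 + C ^ 2) + C ^ 2 := by
        field_simp
        ring


lemma final_estimate (hC : 0 < C) (hE : ∀ t : ℝ, E t = NormedSpace.exp (-((t : ℂ) • A)))
    (hinv : ∀ s : ℝ, 0 < s → IsUnit (1 + (s : ℂ) • A))
    (hA1 : Apow 1 = A)
    (hsmoothE : ∀ γ ∈ Set.Icc (0 : ℝ) (3 / 2), ∀ t : ℝ, 0 < t →
      ‖Apow γ * E t‖ ≤ C * t ^ (-γ))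
    (hsmoothB : ∀ γ ∈ Set.Icc (0 : ℝ) (3 / 2), ∀ n : ℕ, 1 ≤ n → ∀ s : ℝ, 0 < s →
      ‖Apow γ * (Ring.inverse (1 + (s : ℂ) • A)) ^ n‖ ≤ C * (n : ℝ) ^ (-γ) * s ^ (-γ))
    {n : ℕ} (hn : 1 ≤ n) {τ : ℝ} (hτ : 0 < τ) (v : H) :
    ‖(E ((n : ℝ) * τ) - (Ring.inverse (1 + (τ : ℂ) • A)) ^ n) v‖ ≤
      (C * ((1 + C + C ^ 2) + ((1 + C + C ^ 2) * (1 + C ^ 2) + C ^ 2)) / 2) * τ * ‖A v‖ := by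
  set M : ℝ := 1 + C + C ^ 2 with hM
  set M' : ℝ := (1 + C + C ^ 2) * (1 + C ^ 2) + C ^ 2 with hM'
  have hMpos : 0 < M := by positivity
  have hM'pos : 0 < M' := by positivity
  have hnR : (1 : ℝ) ≤ (n : ℝ) := by exact_mod_cast hn
  have hnpos : (0 : ℝ) < (n : ℝ) := by linarith
  set f := fun s : ℝ => (((n : ℝ) * s : ℝ) : ℂ) •
    (A * A * E ((n : ℝ) * (τ - s)) * (Ring.inverse (1 + (s : ℂ) • A)) ^ (n + 1)) with hf
  have hcontOn : ContinuousOn f (Set.Icc 0 τ) := integrand_contOn A E hE hinv n (n + 1) hτ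
  have hint : IntervalIntegrable f MeasureTheory.volume 0 τ := by
    apply ContinuousOn.intervalIntegrable
    rw [Set.uIcc_of_le hτ.le]
    exact hcontOn
  set g := fun s : ℝ => (f s) v with hg
  have hgcontOn : ContinuousOn g (Set.Icc 0 τ) :=
    (ContinuousLinearMap.apply ℂ H v).continuous.comp_continuousOn hcontOn
  have hgint : IntervalIntegrable g MeasureTheory.volume 0 τ := by
    apply ContinuousOn.intervalIntegrable
    rw [Set.uIcc_of_le hτ.le]
    exact hgcontOn
  have hid := euler_identity A E hE hinv n hτ
  have happly : (∫ s in (0 : ℝ)..τ, f s) v = ∫ s in (0 : ℝ)..τ, g s :=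
    ContinuousLinearMap.intervalIntegral_apply hint v
  have hnorm_eq : ‖(E ((n : ℝ) * τ) - (Ring.inverse (1 + (τ : ℂ) • A)) ^ n) v‖
      = ‖∫ s in (0 : ℝ)..τ, g s‖ := by
    rw [hid, ContinuousLinearMap.neg_apply, norm_neg, happly]
  rw [hnorm_eq]
  have hbound : ‖∫ s in (0 : ℝ)..τ, g s‖ ≤
      (C * M' * ‖A v‖ + C * M * ‖A v‖) * (τ / 2) := by
    apply two_piece hτ hgint
    · -- s ∈ (0, τ/2]
      intro s hs
      obtain ⟨hs0, hs2⟩ := hs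
      have hsτ : s < τ := lt_of_le_of_lt hs2 (by linarith)
      have hts : 0 < τ - s := by linarith
      have htpos : 0 < (n : ℝ) * (τ - s) := by positivity
      have hu := hinv s hs0
      have hns : 0 ≤ (n : ℝ) * s := by positivity
      have hfac : A * A * E ((n : ℝ) * (τ - s)) * (Ring.inverse (1 + (s : ℂ) • A)) ^ (n + 1)
          = (A * E ((n : ℝ) * (τ - s)) * (Ring.inverse (1 + (s : ℂ) • A)) ^ (n + 1)) * A :=
        factor4 (commute_A_E A E hE _) (commute_A_B A hu) (n + 1)
      have hval : g s = (((n : ℝ) * s : ℝ) : ℂ) •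
          ((A * E ((n : ℝ) * (τ - s)) * (Ring.inverse (1 + (s : ℂ) • A)) ^ (n + 1)) (A v)) := by
        simp only [hg, hf]
        rw [hfac, ContinuousLinearMap.smul_apply, ContinuousLinearMap.mul_apply]
      rw [hval, norm_coe_smul hns]
      have h1 : ‖A * E ((n : ℝ) * (τ - s))‖ ≤ C / ((n : ℝ) * (τ - s)) :=
        hAE A E C Apow hA1 hsmoothE _ htpos
      have h2 : ‖(Ring.inverse (1 + (s : ℂ) • A) : H →L[ℂ] H) ^ (n + 1)‖ ≤ M' :=
        normBn A E Apow hC hE hinv hA1 hsmoothE hsmoothB (by omega) hs0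
      have hfrac : (n : ℝ) * s * (C / ((n : ℝ) * (τ - s))) ≤ C := by
        rw [mul_div_assoc', div_le_iff₀ htpos]
        have : (0:ℝ) ≤ C * ((n : ℝ) * ((τ - s) - s)) :=
          mul_nonneg hC.le (mul_nonneg hnpos.le (by linarith))
        nlinarith [this]
      calc (n : ℝ) * s *
            ‖(A * E ((n : ℝ) * (τ - s)) * (Ring.inverse (1 + (s : ℂ) • A)) ^ (n + 1)) (A v)‖
          ≤ (n : ℝ) * s * (‖A * E ((n : ℝ) * (τ - s)) *
              (Ring.inverse (1 + (s : ℂ) • A)) ^ (n + 1)‖ * ‖A v‖) := by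
            apply mul_le_mul_of_nonneg_left (ContinuousLinearMap.le_opNorm _ _) hns
        _ ≤ (n : ℝ) * s * ((‖A * E ((n : ℝ) * (τ - s))‖ *
              ‖(Ring.inverse (1 + (s : ℂ) • A) : H →L[ℂ] H) ^ (n + 1)‖) * ‖A v‖) := by
            apply mul_le_mul_of_nonneg_left _ hns
            apply mul_le_mul_of_nonneg_right (norm_mul_le _ _) (norm_nonneg _)
        _ ≤ ((n : ℝ) * s * (C / ((n : ℝ) * (τ - s)))) * (M' * ‖A v‖) := by
            rw [mul_assoc ((n : ℝ) * s)]
            apply mul_le_mul_of_nonneg_left _ hns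
            rw [mul_assoc]
            exact mul_le_mul h1 (mul_le_mul_of_nonneg_right h2 (norm_nonneg _))
              (mul_nonneg (norm_nonneg _) (norm_nonneg _)) (by positivity)
        _ ≤ C * (M' * ‖A v‖) :=
            mul_le_mul_of_nonneg_right hfrac (by positivity)
        _ = C * M' * ‖A v‖ := by ring
    · -- s ∈ (τ/2, τ]
      intro s hs
      obtain ⟨hs2, hsτ⟩ := hs
      have hs0 : 0 < s := by linarith
      have hu := hinv s hs0
      have hts : 0 ≤ (n : ℝ) * (τ - s) := by
        apply mul_nonneg hnpos.le
        linarith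
      have hns : 0 ≤ (n : ℝ) * s := by positivity
      have hfac : A * A * E ((n : ℝ) * (τ - s)) * (Ring.inverse (1 + (s : ℂ) • A)) ^ (n + 1)
          = (E ((n : ℝ) * (τ - s)) * (A * (Ring.inverse (1 + (s : ℂ) • A)) ^ (n + 1))) * A :=
        factor5 (commute_A_E A E hE _) (commute_A_B A hu) (n + 1)
      have hval : g s = (((n : ℝ) * s : ℝ) : ℂ) •
          ((E ((n : ℝ) * (τ - s)) * (A * (Ring.inverse (1 + (s : ℂ) • A)) ^ (n + 1))) (A v)) := by
        simp only [hg, hf]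
        rw [hfac, ContinuousLinearMap.smul_apply, ContinuousLinearMap.mul_apply]
      rw [hval, norm_coe_smul hns]
      have hEb : ‖E ((n : ℝ) * (τ - s))‖ ≤ M :=
        normE A E Apow hC hE hinv hA1 hsmoothE hsmoothB hts
      have h2 : ‖A * (Ring.inverse (1 + (s : ℂ) • A)) ^ (n + 1)‖ ≤ C / (((n : ℕ) + 1 : ℝ) * s) := by
        have := hAB A C Apow hA1 hsmoothB (n + 1) (by omega) s hs0
        rwa [show (((n + 1 : ℕ) : ℝ)) = ((n : ℕ) + 1 : ℝ) by push_cast; ring] at this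
      have hfrac : (n : ℝ) * s * (C / (((n : ℕ) + 1 : ℝ) * s)) ≤ C := by
        have hden : (0:ℝ) < ((n : ℕ) + 1 : ℝ) * s := by positivity
        rw [mul_div_assoc', div_le_iff₀ hden]
        have : (0:ℝ) ≤ C * s := mul_nonneg hC.le hs0.le
        nlinarith [this]
      calc (n : ℝ) * s *
            ‖(E ((n : ℝ) * (τ - s)) * (A * (Ring.inverse (1 + (s : ℂ) • A)) ^ (n + 1))) (A v)‖
          ≤ (n : ℝ) * s * (‖E ((n : ℝ) * (τ - s)) *
              (A * (Ring.inverse (1 + (s : ℂ) • A)) ^ (n + 1))‖ * ‖A v‖) := by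
            apply mul_le_mul_of_nonneg_left (ContinuousLinearMap.le_opNorm _ _) hns
        _ ≤ (n : ℝ) * s * ((‖E ((n : ℝ) * (τ - s))‖ *
              ‖A * (Ring.inverse (1 + (s : ℂ) • A)) ^ (n + 1)‖) * ‖A v‖) := by
            apply mul_le_mul_of_nonneg_left _ hns
            apply mul_le_mul_of_nonneg_right (norm_mul_le _ _) (norm_nonneg _)
        _ ≤ ((n : ℝ) * s * (C / (((n : ℕ) + 1 : ℝ) * s))) * (M * ‖A v‖) := by
            rw [mul_assoc ((n : ℝ) * s)]
            apply mul_le_mul_of_nonneg_left _ hns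
            rw [mul_assoc]
            calc ‖E ((n : ℝ) * (τ - s))‖ * (‖A * (Ring.inverse (1 + (s : ℂ) • A)) ^ (n + 1)‖ * ‖A v‖)
                ≤ M * ((C / (((n : ℕ) + 1 : ℝ) * s)) * ‖A v‖) :=
                  mul_le_mul hEb (mul_le_mul_of_nonneg_right h2 (norm_nonneg _))
                    (by positivity) hMpos.le
              _ = C / (((n : ℕ) + 1 : ℝ) * s) * (M * ‖A v‖) := by ring
        _ ≤ C * (M * ‖A v‖) :=
            mul_le_mul_of_nonneg_right hfrac (by positivity)
        _ = C * M * ‖A v‖ := by ring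
  calc ‖∫ s in (0 : ℝ)..τ, g s‖ ≤ (C * M' * ‖A v‖ + C * M * ‖A v‖) * (τ / 2) := hbound
    _ = (C * (M + M') / 2) * τ * ‖A v‖ := by ring

end Estimates
end Part1
end BEaux


/-- Backward-Euler error representation and smooth-data error bound: with
`E(t) = e^{-tA}` and `B(s) = (I + sA)⁻¹` satisfying the smoothing estimates
`‖A^γ E(t)‖ ≤ C t^{-γ}` and `‖A^γ B(s)ⁿ‖ ≤ C n^{-γ} s^{-γ}` for `γ ∈ [0, 3/2]`,
one has `E(nτ) − B(τ)ⁿ = −∫₀^τ n s A² E(n(τ−s)) B(s)^{n+1} ds` and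
`‖(E(nτ) − B(τ)ⁿ) v‖ ≤ C' τ ‖Av‖`. -/
theorem backward_euler_error_operator
    {H : Type*} [NormedAddCommGroup H] [InnerProductSpace ℂ H] [CompleteSpace H]
    (A : H →L[ℂ] H)
    (E : ℝ → (H →L[ℂ] H))
    (hE : ∀ t : ℝ, E t = NormedSpace.exp (-((t : ℂ) • A)))
    (hinv : ∀ s : ℝ, 0 < s → IsUnit (1 + (s : ℂ) • A))
    (Apow : ℝ → (H →L[ℂ] H)) (hA1 : Apow 1 = A) (hA2 : Apow 2 = A * A)
    (C : ℝ) (hC : 0 < C)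
    (hsmoothE : ∀ γ ∈ Set.Icc (0 : ℝ) (3 / 2), ∀ t : ℝ, 0 < t →
      ‖Apow γ * E t‖ ≤ C * t ^ (-γ))
    (hsmoothB : ∀ γ ∈ Set.Icc (0 : ℝ) (3 / 2), ∀ n : ℕ, 1 ≤ n → ∀ s : ℝ, 0 < s →
      ‖Apow γ * (Ring.inverse (1 + (s : ℂ) • A)) ^ n‖ ≤ C * (n : ℝ) ^ (-γ) * s ^ (-γ)) :
    (∀ n : ℕ, 1 ≤ n → ∀ τ : ℝ, 0 < τ →
      E ((n : ℝ) * τ) - (Ring.inverse (1 + (τ : ℂ) • A)) ^ n =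
        -∫ s in (0 : ℝ)..τ,
          (((n : ℝ) * s : ℝ) : ℂ) •
            (A * A * E ((n : ℝ) * (τ - s)) *
              (Ring.inverse (1 + (s : ℂ) • A)) ^ (n + 1))) ∧
    (∃ C' > (0 : ℝ), ∀ n : ℕ, 1 ≤ n → ∀ τ : ℝ, 0 < τ → ∀ v : H,
      ‖(E ((n : ℝ) * τ) - (Ring.inverse (1 + (τ : ℂ) • A)) ^ n) v‖ ≤
        C' * τ * ‖A v‖) := by
  constructor
  · intro n hn τ hτ
    exact BEaux.Part1.euler_identity A E hE hinv n hτ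
  · refine ⟨C * ((1 + C + C ^ 2) + ((1 + C + C ^ 2) * (1 + C ^ 2) + C ^ 2)) / 2,
      by positivity, ?_⟩
    intro n hn τ hτ v
    exact BEaux.Part1.final_estimate A E Apow hC hE hinv hA1 hsmoothE hsmoothB hn hτ v
end
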